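/- Let (x1, x2, z1) be a point satisfying q·F′(x1·p(x1 + x2) − z1) = (1 − q)·σ, and suppose F″(x1·p(x1 + x2) − z1) > 0, p(x1 + x2) > 0, p(x1 + x2) + x1·p′(x1 + x2) > 0, and that the inequality (In2): P_{x1x1}·P_{z1z1} − (P_{x1z1})² > |P_{x1x2}·P_{z1z1} − P_{x1z1}·P_{x2z1}| holds at this point. Then −P_{x1x1} ≥ −P_{x1x2} at this point, where subscripts on P denote iterated partial derivatives. -/

import Mathlib

/-- The profit function
`P(x1, x2, z1) = (1 - qσ) x1 p(x1+x2) - C(x1) - (1-q)σ z1 - q F(x1 p(x1+x2) - z1)`. -/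
noncomputable def P (σ q : ℝ) (p C F : ℝ → ℝ) (x1 x2 z1 : ℝ) : ℝ :=
  (1 - q * σ) * x1 * p (x1 + x2) - C x1 - (1 - q) * σ * z1
    - q * F (x1 * p (x1 + x2) - z1)

/-- `∂²P/∂x1²` at `(x1, x2, z1)`. -/
noncomputable def Px1x1 (σ q : ℝ) (p C F : ℝ → ℝ) (x1 x2 z1 : ℝ) : ℝ :=
  deriv (deriv (fun v => P σ q p C F v x2 z1)) x1

/-- `∂²P/∂z1²` at `(x1, x2, z1)`. -/
noncomputable def Pz1z1 (σ q : ℝ) (p C F : ℝ → ℝ) (x1 x2 z1 : ℝ) : ℝ :=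
  deriv (deriv (fun w => P σ q p C F x1 x2 w)) z1

/-- `∂²P/∂x1∂z1` at `(x1, x2, z1)` (first differentiate in `x1`, then in `z1`). -/
noncomputable def Px1z1 (σ q : ℝ) (p C F : ℝ → ℝ) (x1 x2 z1 : ℝ) : ℝ :=
  deriv (fun w => deriv (fun v => P σ q p C F v x2 w) x1) z1

/-- `∂²P/∂x1∂x2` at `(x1, x2, z1)` (first differentiate in `x1`, then in `x2`). -/
noncomputable def Px1x2 (σ q : ℝ) (p C F : ℝ → ℝ) (x1 x2 z1 : ℝ) : ℝ :=
  deriv (fun u => deriv (fun v => P σ q p C F v u z1) x1) x2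

/-- `∂²P/∂x2∂z1` at `(x1, x2, z1)` (first differentiate in `x2`, then in `z1`). -/
noncomputable def Px2z1 (σ q : ℝ) (p C F : ℝ → ℝ) (x1 x2 z1 : ℝ) : ℝ :=
  deriv (fun w => deriv (fun u => P σ q p C F x1 u w) x2) z1

/-- at a point satisfying the first-order condition for `z1` with
`F'' > 0`, `p > 0`, `p + x1 p' > 0` there, inequality (In2) implies
`-P_{x1x1} ≥ -P_{x1x2}`. -/
theorem stmt_3 (σ q : ℝ) (hσ0 : 0 < σ) (hσ1 : σ < 1) (hq0 : 0 < q) (hq1 : q < 1)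
    (p C F : ℝ → ℝ) (hp : ContDiff ℝ 2 p) (hC : ContDiff ℝ 2 C) (hF : ContDiff ℝ 2 F)
    (x1 x2 z1 : ℝ)
    (hfoc2 : q * deriv F (x1 * p (x1 + x2) - z1) = (1 - q) * σ)
    (hF2 : 0 < deriv (deriv F) (x1 * p (x1 + x2) - z1))
    (hppos : 0 < p (x1 + x2))
    (hmr : 0 < p (x1 + x2) + x1 * deriv p (x1 + x2))
    (hIn2 : Px1x1 σ q p C F x1 x2 z1 * Pz1z1 σ q p C F x1 x2 z1
        - (Px1z1 σ q p C F x1 x2 z1) ^ 2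
      > |Px1x2 σ q p C F x1 x2 z1 * Pz1z1 σ q p C F x1 x2 z1
          - Px1z1 σ q p C F x1 x2 z1 * Px2z1 σ q p C F x1 x2 z1|) :
    -Px1x1 σ q p C F x1 x2 z1 ≥ -Px1x2 σ q p C F x1 x2 z1 := by
  have hpd : Differentiable ℝ p := hp.differentiable two_ne_zero
  have hCd : Differentiable ℝ C := hC.differentiable two_ne_zero
  have hFd : Differentiable ℝ F := hF.differentiable two_ne_zero
  have hFd' : Differentiable ℝ (deriv F) := by
    have h : ContDiff ℝ (1+1) F := by rw [one_add_one_eq_two]; exact hF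
    exact ((contDiff_succ_iff_deriv.mp h).2.2).differentiable one_ne_zero
  set R : ℝ := x1 * p (x1 + x2) with hR
  set R1 : ℝ := p (x1 + x2) + x1 * deriv p (x1 + x2) with hR1
  set R2 : ℝ := x1 * deriv p (x1 + x2) with hR2
  -- derivative of w ↦ R - w
  have hsub : ∀ w : ℝ, HasDerivAt (fun w : ℝ => R - w) (-1) w := by
    intro w
    simpa using (hasDerivAt_id w).const_sub R
  have hF'w : ∀ w : ℝ, HasDerivAt (fun w => deriv F (R - w))
      (-deriv (deriv F) (R - w)) w := by
    intro w
    have := ((hFd' (R - w)).hasDerivAt).comp w (hsub w)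
    simpa [Function.comp_def] using this
  -- Pz1z1
  have hPz : Pz1z1 σ q p C F x1 x2 z1 = -(q * deriv (deriv F) (R - z1)) := by
    have h1 : ∀ w : ℝ, HasDerivAt (fun w => P σ q p C F x1 x2 w)
        (-((1 - q) * σ) + q * deriv F (R - w)) w := by
      intro w
      have hFc : HasDerivAt (fun w => F (R - w)) (deriv F (R - w) * (-1)) w :=
        ((hFd (R - w)).hasDerivAt).comp w (hsub w)
      have h2 : HasDerivAt (fun w : ℝ =>
          (1 - q * σ) * x1 * p (x1 + x2) - C x1 - (1 - q) * σ * w - q * F (R - w))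
          (0 - 0 - (1 - q) * σ * 1 - q * (deriv F (R - w) * (-1))) w := by
        exact ((((hasDerivAt_const w ((1 - q * σ) * x1 * p (x1 + x2))).sub
          (hasDerivAt_const w (C x1))).sub
          ((hasDerivAt_id w).const_mul ((1 - q) * σ))).sub (hFc.const_mul q))
      have heq : (fun w => P σ q p C F x1 x2 w) = fun w : ℝ =>
          (1 - q * σ) * x1 * p (x1 + x2) - C x1 - (1 - q) * σ * w - q * F (R - w) := by
        funext w; simp [P, hR]
      rw [heq]
      convert h2 using 1; ring
    have hd1 : deriv (fun w => P σ q p C F x1 x2 w)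
        = fun w => -((1 - q) * σ) + q * deriv F (R - w) := by
      funext w; exact (h1 w).deriv
    rw [Pz1z1, hd1]
    have h2 : HasDerivAt (fun w => -((1 - q) * σ) + q * deriv F (R - w))
        (q * (-deriv (deriv F) (R - z1))) z1 :=
      (((hF'w z1).const_mul q)).const_add _
    rw [h2.deriv]; ring
  -- inner x1-derivative
  have hInner1 : ∀ w : ℝ, deriv (fun v => P σ q p C F v x2 w) x1
      = (1 - q * σ) * R1 - deriv C x1 - q * (deriv F (R - w) * R1) := by
    intro w
    have hadd : HasDerivAt (fun v : ℝ => v + x2) 1 x1 := (hasDerivAt_id x1).add_const x2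
    have hpc : HasDerivAt (fun v => p (v + x2)) (deriv p (x1 + x2) * 1) x1 :=
      ((hpd (x1 + x2)).hasDerivAt).comp x1 hadd
    have hg : HasDerivAt (fun v => v * p (v + x2)) R1 x1 := by
      have := (hasDerivAt_id x1).mul hpc
      exact this.congr_deriv (by simp [hR1, hR2])
    have hFc : HasDerivAt (fun v => F (v * p (v + x2) - w)) (deriv F (R - w) * R1) x1 :=
      ((hFd (R - w)).hasDerivAt).comp x1 (hg.sub_const w)
    have h2 : HasDerivAt (fun v : ℝ =>
        (1 - q * σ) * (v * p (v + x2)) - C v - (1 - q) * σ * w - q * F (v * p (v + x2) - w))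
        ((1 - q * σ) * R1 - deriv C x1 - 0 - q * (deriv F (R - w) * R1)) x1 :=
      (((hg.const_mul (1 - q * σ)).sub (hCd x1).hasDerivAt).sub
        (hasDerivAt_const x1 ((1 - q) * σ * w))).sub (hFc.const_mul q)
    have heq : (fun v => P σ q p C F v x2 w) = fun v : ℝ =>
        (1 - q * σ) * (v * p (v + x2)) - C v - (1 - q) * σ * w - q * F (v * p (v + x2) - w) := by
      funext v; simp [P]; ring
    rw [heq, h2.deriv]; ring
  have hPxz : Px1z1 σ q p C F x1 x2 z1 = q * deriv (deriv F) (R - z1) * R1 := by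
    rw [Px1z1]
    have heq : (fun w => deriv (fun v => P σ q p C F v x2 w) x1)
        = fun w => (1 - q * σ) * R1 - deriv C x1 - q * (deriv F (R - w) * R1) := by
      funext w; exact hInner1 w
    rw [heq]
    have h2 : HasDerivAt (fun w => (1 - q * σ) * R1 - deriv C x1
        - q * (deriv F (R - w) * R1)) (q * deriv (deriv F) (R - z1) * R1) z1 := by
      have := (((hF'w z1).mul_const R1).const_mul q).const_sub ((1 - q * σ) * R1 - deriv C x1)
      exact this.congr_deriv (by ring)
    exact h2.deriv
  -- inner x2-derivative
  have hInner2 : ∀ w : ℝ, deriv (fun u => P σ q p C F x1 u w) x2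
      = (1 - q * σ) * R2 - q * (deriv F (R - w) * R2) := by
    intro w
    have hadd : HasDerivAt (fun u : ℝ => x1 + u) 1 x2 := by
      simpa using (hasDerivAt_id x2).const_add x1
    have hpc : HasDerivAt (fun u => p (x1 + u)) (deriv p (x1 + x2) * 1) x2 :=
      ((hpd (x1 + x2)).hasDerivAt).comp x2 hadd
    have hg : HasDerivAt (fun u => x1 * p (x1 + u)) R2 x2 := by
      have := hpc.const_mul x1
      exact this.congr_deriv (by simp [hR2])
    have hFc : HasDerivAt (fun u => F (x1 * p (x1 + u) - w)) (deriv F (R - w) * R2) x2 :=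
      ((hFd (R - w)).hasDerivAt).comp x2 (hg.sub_const w)
    have h2 : HasDerivAt (fun u : ℝ =>
        (1 - q * σ) * (x1 * p (x1 + u)) - C x1 - (1 - q) * σ * w - q * F (x1 * p (x1 + u) - w))
        ((1 - q * σ) * R2 - 0 - 0 - q * (deriv F (R - w) * R2)) x2 :=
      (((hg.const_mul (1 - q * σ)).sub (hasDerivAt_const x2 (C x1))).sub
        (hasDerivAt_const x2 ((1 - q) * σ * w))).sub (hFc.const_mul q)
    have heq : (fun u => P σ q p C F x1 u w) = fun u : ℝ =>
        (1 - q * σ) * (x1 * p (x1 + u)) - C x1 - (1 - q) * σ * w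
          - q * F (x1 * p (x1 + u) - w) := by
      funext u; simp [P]; ring
    rw [heq, h2.deriv]; ring
  have hPx2z : Px2z1 σ q p C F x1 x2 z1 = q * deriv (deriv F) (R - z1) * R2 := by
    rw [Px2z1]
    have heq : (fun w => deriv (fun u => P σ q p C F x1 u w) x2)
        = fun w => (1 - q * σ) * R2 - q * (deriv F (R - w) * R2) := by
      funext w; exact hInner2 w
    rw [heq]
    have h2 : HasDerivAt (fun w => (1 - q * σ) * R2 - q * (deriv F (R - w) * R2))
        (q * deriv (deriv F) (R - z1) * R2) z1 := by
      have := (((hF'w z1).mul_const R2).const_mul q).const_sub ((1 - q * σ) * R2)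
      exact this.congr_deriv (by ring)
    exact h2.deriv
  -- final algebra
  set A := Px1x1 σ q p C F x1 x2 z1
  set B := Px1x2 σ q p C F x1 x2 z1
  set D : ℝ := q * deriv (deriv F) (R - z1) with hD
  have hDpos : 0 < D := mul_pos hq0 hF2
  rw [hPz, hPxz, hPx2z] at hIn2
  have habs : B * -(D) - D * R1 * (D * R2) ≤ |B * -(D) - D * R1 * (D * R2)| :=
    le_abs_self _
  have key : A * -(D) - (D * R1) ^ 2 > B * -(D) - D * R1 * (D * R2) :=
    lt_of_le_of_lt habs hIn2
  -- from key : D * (B - A) > D^2 * R1 * (R1 - R2) = D^2 * R1 * p(x1+x2) > 0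
  have hR1R2 : R1 - R2 = p (x1 + x2) := by rw [hR1, hR2]; ring
  have hDB : D * (B - A) > D * D * R1 * p (x1 + x2) := by nlinarith [key, hR1R2]
  have hpos : 0 < D * D * R1 * p (x1 + x2) :=
    mul_pos (mul_pos (mul_pos hDpos hDpos) hmr) hppos
  have hBA : 0 < B - A := by
    by_contra h
    push_neg at h
    nlinarith [mul_nonpos_of_nonneg_of_nonpos hDpos.le h]
  linarith
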